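/- Fix Δ ∈ ℤ with Δ ≥ 2. Let G = (V, E) be a finite multigraph of maximum degree at most Δ with interaction φ : E → ℝ satisfying |φ(ε)| ≤ 1 for all ε ∈ E, and let β ∈ ℂ satisfy |β| ≤ 1/(e⁴Δ). Then Z_Ising(G;β) ≠ 0. -/

import Mathlib

open scoped Classical

namespace Stmt8

variable {V Eg : Type*}

/-- The spin `±1` associated to a Boolean configuration value. -/
def spin (b : Bool) : ℝ := if b then 1 else -1

/-- The product `σ_u σ_v` of the spins at the two endpoints of an (unordered) edge. -/
def spinProd (σ : V → Bool) : Sym2 V → ℝ :=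
  Sym2.lift ⟨fun u v => spin (σ u) * spin (σ v), fun _ _ => mul_comm _ _⟩

/-- The normalized Ising partition function
`Z_Ising(G;β) = 2^{−|V|} Σ_{σ ∈ {−1,+1}^V} Π_{ε={u,v} ∈ E} e^{−β φ(ε) σ_u σ_v}`. -/
noncomputable def Zising [Fintype V] [Fintype Eg]
    (ends : Eg → Sym2 V) (φ : Eg → ℝ) (β : ℂ) : ℂ :=
  (2 : ℂ) ^ (-(Fintype.card V : ℤ)) *
    ∑ σ : V → Bool, ∏ e : Eg, Complex.exp (-β * (φ e : ℂ) * (spinProd σ (ends e) : ℝ))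

/-- The degree of a vertex `v`: the number of edges containing `v`. -/
noncomputable def degree [Fintype Eg] (ends : Eg → Sym2 V) (v : V) : ℕ :=
  Nat.card {e : Eg // v ∈ ends e}

/-! ### Auxiliary lemmas -/

lemma spin_abs (b : Bool) : |spin b| = 1 := by cases b <;> simp [spin]

lemma spin_not (b : Bool) : spin (!b) = - spin b := by cases b <;> simp [spin]

lemma spinProd_mk (σ : V → Bool) (x y : V) :
    spinProd σ s(x, y) = spin (σ x) * spin (σ y) := rfl

lemma spinProd_abs (σ : V → Bool) (s : Sym2 V) : |spinProd σ s| ≤ 1 := by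
  induction s using Sym2.ind with
  | _ x y => rw [spinProd_mk, abs_mul, spin_abs, spin_abs]; norm_num

lemma spinProd_congr {σ τ : V → Bool} {s : Sym2 V} (h : ∀ x ∈ s, σ x = τ x) :
    spinProd σ s = spinProd τ s := by
  induction s using Sym2.ind with
  | _ x y =>
    rw [spinProd_mk, spinProd_mk, h x (by simp), h y (by simp)]

lemma spinProd_update_not_mem {σ : V → Bool} {s : Sym2 V} {v : V} (h : v ∉ s) (b : Bool) :
    spinProd (Function.update σ v b) s = spinProd σ s := by
  apply spinProd_congr
  intro x hx
  have : x ≠ v := fun hxv => h (hxv ▸ hx)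
  rw [Function.update_of_ne this]

lemma spinProd_flip {σ : V → Bool} {s : Sym2 V} {v : V} (hm : v ∈ s) (hd : ¬ s.IsDiag) :
    spinProd (Function.update σ v (!(σ v))) s = - spinProd σ s := by
  induction s using Sym2.ind with
  | _ x y =>
    have hxy : x ≠ y := by simpa [Sym2.mk_isDiag_iff] using hd
    rcases Sym2.mem_iff.mp hm with rfl | rfl
    · rw [spinProd_mk, spinProd_mk, Function.update_self,
        Function.update_of_ne (Ne.symm hxy), spin_not]
      ring
    · rw [spinProd_mk, spinProd_mk, Function.update_self,
        Function.update_of_ne hxy, spin_not]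
      ring

section Aux

variable [Fintype V] [Fintype Eg]

/-- The weight of a single configuration. -/
noncomputable def w (ends : Eg → Sym2 V) (β : ℂ) (φ : Eg → ℝ) (σ : V → Bool) : ℂ :=
  ∏ e : Eg, Complex.exp (-β * (φ e : ℂ) * (spinProd σ (ends e) : ℝ))

/-- The partition function pinned outside `S` by `τ`. -/
noncomputable def Zp (ends : Eg → Sym2 V) (β : ℂ) (φ : Eg → ℝ) (S : Finset V)
    (τ : V → Bool) : ℂ :=
  ∑ σ : V → Bool, if ∀ x ∉ S, σ x = τ x then w ends β φ σ else 0

lemma w_ne_zero (ends : Eg → Sym2 V) (β : ℂ) (φ : Eg → ℝ) (σ : V → Bool) :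
    w ends β φ σ ≠ 0 :=
  Finset.prod_ne_zero_iff.mpr fun _ _ => Complex.exp_ne_zero _

lemma Zp_empty (ends : Eg → Sym2 V) (β : ℂ) (φ : Eg → ℝ) (τ : V → Bool) :
    Zp ends β φ (∅ : Finset V) τ = w ends β φ τ := by
  unfold Zp
  rw [Finset.sum_eq_single τ]
  · simp
  · intro σ _ hσ
    rw [if_neg]
    intro h
    exact hσ (funext fun x => h x (by simp))
  · intro h
    exact absurd (Finset.mem_univ τ) h

lemma Zp_split (ends : Eg → Sym2 V) (β : ℂ) (φ : Eg → ℝ) {S : Finset V} {u : V}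
    (hu : u ∈ S) (τ : V → Bool) :
    Zp ends β φ S τ =
      Zp ends β φ (S.erase u) (Function.update τ u true) +
      Zp ends β φ (S.erase u) (Function.update τ u false) := by
  unfold Zp
  rw [← Finset.sum_add_distrib]
  apply Finset.sum_congr rfl
  intro σ _
  have key : ∀ b : Bool,
      (∀ x ∉ S.erase u, σ x = Function.update τ u b x) ↔
        ((∀ x ∉ S, σ x = τ x) ∧ σ u = b) := by
    intro b
    constructor
    · intro h
      refine ⟨fun x hx => ?_, ?_⟩
      · have hxu : x ≠ u := fun h' => hx (h' ▸ hu)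
        have := h x (by simp [Finset.mem_erase, hx, hxu])
        rwa [Function.update_of_ne hxu] at this
      · have := h u (by simp)
        rwa [Function.update_self] at this
    · rintro ⟨h1, h2⟩ x hx
      rcases eq_or_ne x u with rfl | hxu
      · rwa [Function.update_self]
      · rw [Function.update_of_ne hxu]
        exact h1 x (fun hxS => hx (Finset.mem_erase.mpr ⟨hxu, hxS⟩))
  by_cases h1 : ∀ x ∉ S, σ x = τ x
  · cases hσu : σ u
    · rw [if_pos h1, if_neg, if_pos ((key false).mpr ⟨h1, hσu⟩), zero_add]
      rw [key true]
      simp [hσu]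
    · rw [if_pos h1, if_pos ((key true).mpr ⟨h1, hσu⟩), if_neg, add_zero]
      rw [key false]
      simp [hσu]
  · rw [if_neg h1, if_neg, if_neg, add_zero]
    · rw [key false]; tauto
    · rw [key true]; tauto

lemma w_flip_edge {ends : Eg → Sym2 V} {β : ℂ} {ψ ψ' : Eg → ℝ} {e₀ : Eg}
    (h1 : ψ' e₀ = -ψ e₀) (h2 : ∀ e ≠ e₀, ψ' e = ψ e) (σ : V → Bool) :
    w ends β ψ' σ =
      Complex.exp (2 * β * (ψ e₀ : ℂ) * (spinProd σ (ends e₀) : ℝ)) * w ends β ψ σ := by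
  unfold w
  have step : ∀ e : Eg, Complex.exp (-β * (ψ' e : ℂ) * (spinProd σ (ends e) : ℝ)) =
      (if e = e₀ then Complex.exp (2 * β * (ψ e₀ : ℂ) * (spinProd σ (ends e₀) : ℝ)) else 1) *
        Complex.exp (-β * (ψ e : ℂ) * (spinProd σ (ends e) : ℝ)) := by
    intro e
    rcases eq_or_ne e e₀ with rfl | he
    · rw [if_pos rfl, ← Complex.exp_add, h1]
      congr 1
      push_cast
      ring
    · rw [if_neg he, one_mul, h2 e he]
  rw [Finset.prod_congr rfl (fun e _ => step e), Finset.prod_mul_distrib,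
    Finset.prod_ite_eq' Finset.univ e₀
      (fun _ => Complex.exp (2 * β * (ψ e₀ : ℂ) * (spinProd σ (ends e₀) : ℝ))),
    if_pos (Finset.mem_univ e₀)]

lemma Zp_flip_edge_pinned {ends : Eg → Sym2 V} {β : ℂ} {ψ ψ' : Eg → ℝ} {e₀ : Eg}
    (h1 : ψ' e₀ = -ψ e₀) (h2 : ∀ e ≠ e₀, ψ' e = ψ e) {S : Finset V} (τ : V → Bool)
    (hpin : ∀ x ∈ ends e₀, x ∉ S) :
    Zp ends β ψ' S τ =
      Complex.exp (2 * β * (ψ e₀ : ℂ) * (spinProd τ (ends e₀) : ℝ)) * Zp ends β ψ S τ := by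
  unfold Zp
  rw [Finset.mul_sum]
  apply Finset.sum_congr rfl
  intro σ _
  by_cases hc : ∀ x ∉ S, σ x = τ x
  · rw [if_pos hc, if_pos hc, w_flip_edge h1 h2,
      spinProd_congr (fun x hx => hc x (hpin x hx))]
  · rw [if_neg hc, if_neg hc, mul_zero]

lemma flip_involutive (v : V) :
    Function.Involutive (fun σ : V → Bool => Function.update σ v (!(σ v))) := by
  intro σ
  funext x
  rcases eq_or_ne x v with rfl | hx
  · simp
  · simp [Function.update_of_ne hx]

lemma Zp_flip_vertex {ends : Eg → Sym2 V} {β : ℂ} (hloop : ∀ e : Eg, ¬ (ends e).IsDiag)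
    {φ ψF : Eg → ℝ} {v : V} (hψF : ∀ e, ψF e = if v ∈ ends e then -φ e else φ e)
    {S : Finset V} (hv : v ∉ S) (τ : V → Bool) :
    Zp ends β ψF S (Function.update τ v true) =
      Zp ends β φ S (Function.update τ v false) := by
  unfold Zp
  apply Fintype.sum_bijective _ (flip_involutive v).bijective
  intro σ
  have hcond : (∀ x ∉ S, σ x = Function.update τ v true x) ↔
      (∀ x ∉ S, Function.update σ v (!(σ v)) x = Function.update τ v false x) := by
    apply forall₂_congr
    intro x hx
    rcases eq_or_ne x v with rfl | hxv
    · rw [Function.update_self, Function.update_self, Function.update_self]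
      cases σ x <;> simp
    · rw [Function.update_of_ne hxv, Function.update_of_ne hxv, Function.update_of_ne hxv]
  have hw : w ends β ψF σ = w ends β φ (Function.update σ v (!(σ v))) := by
    unfold w
    apply Finset.prod_congr rfl
    intro e _
    by_cases hm : v ∈ ends e
    · rw [hψF e, if_pos hm, spinProd_flip hm (hloop e)]
      congr 1
      push_cast
      ring
    · rw [hψF e, if_neg hm, spinProd_update_not_mem hm]
  by_cases hc : ∀ x ∉ S, σ x = Function.update τ v true x
  · rw [if_pos hc, if_pos (hcond.mp hc), hw]
  · rw [if_neg hc, if_neg (fun h => hc (hcond.mpr h))]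

lemma abs_sub_le_abs_add (a b : ℂ) :
    ‖a‖ - ‖b‖ ≤ ‖a + b‖ := by
  have h := norm_add_le (a + b) (-b)
  rw [add_neg_cancel_right, norm_neg] at h
  linarith

lemma exp_le_inv_one_sub {t : ℝ} (h1 : t < 1) : Real.exp t ≤ 1 / (1 - t) := by
  have hh : 1 - t ≤ Real.exp (-t) := by
    have := Real.add_one_le_exp (-t); linarith
  rw [le_div_iff₀ (by linarith : (0:ℝ) < 1 - t)]
  calc Real.exp t * (1 - t) ≤ Real.exp t * Real.exp (-t) :=
        mul_le_mul_of_nonneg_left hh (Real.exp_nonneg t)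
    _ = 1 := by rw [← Real.exp_add]; simp

/-! ### The main induction -/

lemma main (ends : Eg → Sym2 V) (β : ℂ) (hloop : ∀ e : Eg, ¬ (ends e).IsDiag)
    (D : ℕ) (hD : 1 ≤ D) (hdeg : ∀ v : V, degree ends v ≤ D)
    (hb : (D : ℝ) * ‖β‖ ≤ 1 / 53) :
    ∀ k : ℕ, ∀ φ : Eg → ℝ, (∀ e, |φ e| ≤ 1) → ∀ S : Finset V, S.card = k →
      ∀ τ : V → Bool,
      Zp ends β φ S τ ≠ 0 ∧
      ∀ v ∉ S,
        ‖Zp ends β φ S (Function.update τ v false)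
            - Zp ends β φ S (Function.update τ v true)‖
          ≤ (1/5) * ‖Zp ends β φ S (Function.update τ v true)‖ := by
  have hb0 : 0 ≤ ‖β‖ := norm_nonneg β
  have hb1 : ‖β‖ ≤ 1 / 53 := by
    have hD' : (1:ℝ) ≤ (D:ℝ) := by exact_mod_cast hD
    nlinarith
  intro k
  induction k using Nat.strong_induction_on with
  | _ k IH =>
  intro φ hφ S hS τ
  constructor
  · -- nonvanishing
    rcases Finset.eq_empty_or_nonempty S with rfl | ⟨u, hu⟩
    · rw [Zp_empty]
      exact w_ne_zero ends β φ τ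
    · have hk : 0 < k := hS ▸ Finset.card_pos.mpr ⟨u, hu⟩
      have hcard : (S.erase u).card = k - 1 := by
        rw [Finset.card_erase_of_mem hu, hS]
      have hlt : k - 1 < k := Nat.sub_lt hk one_pos
      obtain ⟨hne, -⟩ := IH (k-1) hlt φ hφ (S.erase u) hcard (Function.update τ u true)
      obtain ⟨-, hrat⟩ := IH (k-1) hlt φ hφ (S.erase u) hcard τ
      have h2 := hrat u (Finset.notMem_erase u S)
      have hApos : 0 < ‖Zp ends β φ (S.erase u) (Function.update τ u true)‖ :=
        norm_pos_iff.mpr hne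
      rw [Zp_split ends β φ hu τ]
      intro h0
      have key : (9/5) * ‖Zp ends β φ (S.erase u) (Function.update τ u true)‖
          ≤ ‖Zp ends β φ (S.erase u) (Function.update τ u true)
              + Zp ends β φ (S.erase u) (Function.update τ u false)‖ := by
        have e1 : Zp ends β φ (S.erase u) (Function.update τ u true)
              + Zp ends β φ (S.erase u) (Function.update τ u false)
            = 2 * Zp ends β φ (S.erase u) (Function.update τ u true)
              + (Zp ends β φ (S.erase u) (Function.update τ u false)
                - Zp ends β φ (S.erase u) (Function.update τ u true)) := by ring
        have e2 := abs_sub_le_abs_add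
          (2 * Zp ends β φ (S.erase u) (Function.update τ u true))
          (Zp ends β φ (S.erase u) (Function.update τ u false)
            - Zp ends β φ (S.erase u) (Function.update τ u true))
        rw [← e1] at e2
        have e3 : ‖2 * Zp ends β φ (S.erase u) (Function.update τ u true)‖
            = 2 * ‖Zp ends β φ (S.erase u) (Function.update τ u true)‖ := by
          rw [norm_mul, Complex.norm_two]
        linarith
      rw [h0] at key
      simp only [norm_zero] at key
      linarith
  · -- ratio bound
    intro v hv
    have hq0 : (0:ℝ) ≤ (44/9) * ‖β‖ := by positivity
    -- single-edge flip step
    have step : ∀ e₀ : Eg, v ∈ ends e₀ → ∀ ψ ψ' : Eg → ℝ, (∀ e, |ψ e| ≤ 1) →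
        ψ' e₀ = -ψ e₀ → (∀ e, e ≠ e₀ → ψ' e = ψ e) →
        ‖Zp ends β ψ' S (Function.update τ v true)
            - Zp ends β ψ S (Function.update τ v true)‖
          ≤ ((44/9) * ‖β‖) *
              ‖Zp ends β ψ S (Function.update τ v true)‖ := by
      intro e₀ he ψ ψ' hψ h1 h2
      have hcexp : ∀ τ' : V → Bool,
          ‖Complex.exp (2 * β * (ψ e₀ : ℂ) * (spinProd τ' (ends e₀) : ℝ)) - 1‖
            ≤ 4 * ‖β‖ := by
        intro τ'
        have habs : ‖2 * β * (ψ e₀ : ℂ) * ((spinProd τ' (ends e₀) : ℝ) : ℂ)‖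
            ≤ 2 * ‖β‖ := by
          rw [norm_mul, norm_mul, norm_mul, Complex.norm_two, Complex.norm_real, Real.norm_eq_abs,
            Complex.norm_real, Real.norm_eq_abs]
          have g1 := hψ e₀
          have g2 := spinProd_abs τ' (ends e₀)
          have g3 : (0:ℝ) ≤ |ψ e₀| := abs_nonneg _
          have g4 : (0:ℝ) ≤ |spinProd τ' (ends e₀)| := abs_nonneg _
          have g5 : |ψ e₀| * |spinProd τ' (ends e₀)| ≤ 1 := by nlinarith
          nlinarith [mul_le_mul_of_nonneg_left g5
            (by positivity : (0:ℝ) ≤ 2 * ‖β‖)]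
        have h1' : ‖2 * β * (ψ e₀ : ℂ) * ((spinProd τ' (ends e₀) : ℝ) : ℂ)‖ ≤ 1 := by
          linarith
        have := Complex.norm_exp_sub_one_le h1'
        linarith
      have hu : s(v, Sym2.Mem.other he) = ends e₀ := Sym2.other_spec he
      have hmem : ∀ x ∈ ends e₀, x = v ∨ x = Sym2.Mem.other he := by
        intro x hx
        rw [← hu] at hx
        exact Sym2.mem_iff.mp hx
      by_cases huS : Sym2.Mem.other he ∈ S
      · -- other endpoint free: split at it
        have hk : 0 < k := hS ▸ Finset.card_pos.mpr ⟨_, huS⟩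
        have hcard : (S.erase (Sym2.Mem.other he)).card = k - 1 := by
          rw [Finset.card_erase_of_mem huS, hS]
        have hlt : k - 1 < k := Nat.sub_lt hk one_pos
        have hpin : ∀ x ∈ ends e₀, x ∉ S.erase (Sym2.Mem.other he) := by
          intro x hx
          rcases hmem x hx with rfl | rfl
          · exact fun hxx => hv (Finset.mem_of_mem_erase hxx)
          · exact Finset.notMem_erase _ S
        obtain ⟨hZt0, -⟩ := IH (k-1) hlt ψ hψ (S.erase (Sym2.Mem.other he)) hcard
          (Function.update (Function.update τ v true) (Sym2.Mem.other he) true)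
        obtain ⟨-, hr⟩ := IH (k-1) hlt ψ hψ (S.erase (Sym2.Mem.other he)) hcard
          (Function.update τ v true)
        have hrat := hr (Sym2.Mem.other he) (Finset.notMem_erase _ S)
        have hsplit := Zp_split ends β ψ huS (Function.update τ v true)
        have hsplit' := Zp_split ends β ψ' huS (Function.update τ v true)
        have hct := Zp_flip_edge_pinned (β := β) h1 h2
          (Function.update (Function.update τ v true) (Sym2.Mem.other he) true) hpin
        have hcf := Zp_flip_edge_pinned (β := β) h1 h2
          (Function.update (Function.update τ v true) (Sym2.Mem.other he) false) hpin
        have hdiff : Zp ends β ψ' S (Function.update τ v true)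
              - Zp ends β ψ S (Function.update τ v true)
            = (Complex.exp (2 * β * (ψ e₀ : ℂ) *
                  ((spinProd (Function.update (Function.update τ v true)
                    (Sym2.Mem.other he) true) (ends e₀) : ℝ) : ℂ)) - 1) *
                Zp ends β ψ (S.erase (Sym2.Mem.other he))
                  (Function.update (Function.update τ v true) (Sym2.Mem.other he) true)
              + (Complex.exp (2 * β * (ψ e₀ : ℂ) *
                  ((spinProd (Function.update (Function.update τ v true)
                    (Sym2.Mem.other he) false) (ends e₀) : ℝ) : ℂ)) - 1) *
                Zp ends β ψ (S.erase (Sym2.Mem.other he))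
                  (Function.update (Function.update τ v true) (Sym2.Mem.other he) false) := by
          rw [hsplit, hsplit', hct, hcf]
          ring
        rw [hdiff, hsplit]
        have t1 := norm_add_le
          ((Complex.exp (2 * β * (ψ e₀ : ℂ) *
              ((spinProd (Function.update (Function.update τ v true)
                (Sym2.Mem.other he) true) (ends e₀) : ℝ) : ℂ)) - 1) *
            Zp ends β ψ (S.erase (Sym2.Mem.other he))
              (Function.update (Function.update τ v true) (Sym2.Mem.other he) true))
          ((Complex.exp (2 * β * (ψ e₀ : ℂ) *
              ((spinProd (Function.update (Function.update τ v true)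
                (Sym2.Mem.other he) false) (ends e₀) : ℝ) : ℂ)) - 1) *
            Zp ends β ψ (S.erase (Sym2.Mem.other he))
              (Function.update (Function.update τ v true) (Sym2.Mem.other he) false))
        rw [norm_mul, norm_mul] at t1
        have c1 := hcexp (Function.update (Function.update τ v true) (Sym2.Mem.other he) true)
        have c2 := hcexp (Function.update (Function.update τ v true) (Sym2.Mem.other he) false)
        have a1 : (0:ℝ) ≤ ‖Zp ends β ψ (S.erase (Sym2.Mem.other he))
            (Function.update (Function.update τ v true) (Sym2.Mem.other he) true)‖ :=
          norm_nonneg _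
        have a2 : (0:ℝ) ≤ ‖Zp ends β ψ (S.erase (Sym2.Mem.other he))
            (Function.update (Function.update τ v true) (Sym2.Mem.other he) false)‖ :=
          norm_nonneg _
        -- |Zf| ≤ (6/5)|Zt|
        have aZf : ‖Zp ends β ψ (S.erase (Sym2.Mem.other he))
              (Function.update (Function.update τ v true) (Sym2.Mem.other he) false)‖
            ≤ (6/5) * ‖Zp ends β ψ (S.erase (Sym2.Mem.other he))
              (Function.update (Function.update τ v true) (Sym2.Mem.other he) true)‖ := by
          have e4 := norm_add_le
            (Zp ends β ψ (S.erase (Sym2.Mem.other he))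
                (Function.update (Function.update τ v true) (Sym2.Mem.other he) false)
              - Zp ends β ψ (S.erase (Sym2.Mem.other he))
                (Function.update (Function.update τ v true) (Sym2.Mem.other he) true))
            (Zp ends β ψ (S.erase (Sym2.Mem.other he))
              (Function.update (Function.update τ v true) (Sym2.Mem.other he) true))
          rw [sub_add_cancel] at e4
          linarith
        -- (9/5)|Zt| ≤ |Zt + Zf|
        have aZ : (9/5) * ‖Zp ends β ψ (S.erase (Sym2.Mem.other he))
              (Function.update (Function.update τ v true) (Sym2.Mem.other he) true)‖
            ≤ ‖Zp ends β ψ (S.erase (Sym2.Mem.other he))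
                (Function.update (Function.update τ v true) (Sym2.Mem.other he) true)
              + Zp ends β ψ (S.erase (Sym2.Mem.other he))
                (Function.update (Function.update τ v true) (Sym2.Mem.other he) false)‖ := by
          have e1 : Zp ends β ψ (S.erase (Sym2.Mem.other he))
                (Function.update (Function.update τ v true) (Sym2.Mem.other he) true)
              + Zp ends β ψ (S.erase (Sym2.Mem.other he))
                (Function.update (Function.update τ v true) (Sym2.Mem.other he) false)
              = 2 * Zp ends β ψ (S.erase (Sym2.Mem.other he))
                  (Function.update (Function.update τ v true) (Sym2.Mem.other he) true)
                + (Zp ends β ψ (S.erase (Sym2.Mem.other he))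
                    (Function.update (Function.update τ v true) (Sym2.Mem.other he) false)
                  - Zp ends β ψ (S.erase (Sym2.Mem.other he))
                    (Function.update (Function.update τ v true) (Sym2.Mem.other he) true)) := by
            ring
          have e2 := abs_sub_le_abs_add
            (2 * Zp ends β ψ (S.erase (Sym2.Mem.other he))
                (Function.update (Function.update τ v true) (Sym2.Mem.other he) true))
            (Zp ends β ψ (S.erase (Sym2.Mem.other he))
                (Function.update (Function.update τ v true) (Sym2.Mem.other he) false)
              - Zp ends β ψ (S.erase (Sym2.Mem.other he))
                (Function.update (Function.update τ v true) (Sym2.Mem.other he) true))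
          rw [← e1] at e2
          rw [norm_mul, Complex.norm_two] at e2
          linarith
        nlinarith
      · -- both endpoints pinned
        have hpin : ∀ x ∈ ends e₀, x ∉ S := by
          intro x hx
          rcases hmem x hx with rfl | rfl
          · exact hv
          · exact huS
        have hc := Zp_flip_edge_pinned (β := β) h1 h2 (Function.update τ v true) hpin
        rw [hc]
        have e1 : Complex.exp (2 * β * (ψ e₀ : ℂ) *
              ((spinProd (Function.update τ v true) (ends e₀) : ℝ) : ℂ)) *
              Zp ends β ψ S (Function.update τ v true)
            - Zp ends β ψ S (Function.update τ v true)
            = (Complex.exp (2 * β * (ψ e₀ : ℂ) *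
                ((spinProd (Function.update τ v true) (ends e₀) : ℝ) : ℂ)) - 1) *
              Zp ends β ψ S (Function.update τ v true) := by ring
        rw [e1, norm_mul]
        have c1 := hcexp (Function.update τ v true)
        have a1 : (0:ℝ) ≤ ‖Zp ends β ψ S (Function.update τ v true)‖ :=
          norm_nonneg _
        nlinarith
    -- interpolate over all edges at v
    have claim : ∀ T : Finset Eg, (∀ e ∈ T, v ∈ ends e) →
        ‖Zp ends β (fun e => if e ∈ T then -φ e else φ e) S
              (Function.update τ v true)
            - Zp ends β φ S (Function.update τ v true)‖
          ≤ ((1 + (44/9) * ‖β‖) ^ T.card - 1) *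
              ‖Zp ends β φ S (Function.update τ v true)‖ := by
      intro T
      induction T using Finset.induction_on with
      | empty =>
        intro _
        have : (fun e => if e ∈ (∅ : Finset Eg) then -φ e else φ e) = φ := by
          funext e; simp
        rw [this]
        simp
      | @insert e₀ T he₀T ih =>
        intro hTF
        have hTF' : ∀ e ∈ T, v ∈ ends e := fun e heT => hTF e (Finset.mem_insert_of_mem heT)
        have hvE0 : v ∈ ends e₀ := hTF e₀ (Finset.mem_insert_self e₀ T)
        have hψabs : ∀ e, |(fun e => if e ∈ T then -φ e else φ e) e| ≤ 1 := by
          intro e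
          by_cases h : e ∈ T <;> simp [h, abs_neg, hφ e]
        have h1 : (fun e => if e ∈ insert e₀ T then -φ e else φ e) e₀
            = -(fun e => if e ∈ T then -φ e else φ e) e₀ := by
          simp [he₀T]
        have h2 : ∀ e, e ≠ e₀ → (fun e => if e ∈ insert e₀ T then -φ e else φ e) e
            = (fun e => if e ∈ T then -φ e else φ e) e := by
          intro e he
          simp only [Finset.mem_insert]
          by_cases h : e ∈ T <;> simp [h, he]
        have hstep := step e₀ hvE0 _ _ hψabs h1 h2
        have hih := ih hTF'
        have hZψ : ‖Zp ends β (fun e => if e ∈ T then -φ e else φ e) S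
              (Function.update τ v true)‖
            ≤ (1 + (44/9) * ‖β‖) ^ T.card *
                ‖Zp ends β φ S (Function.update τ v true)‖ := by
          have e4 := norm_add_le
            (Zp ends β (fun e => if e ∈ T then -φ e else φ e) S (Function.update τ v true)
              - Zp ends β φ S (Function.update τ v true))
            (Zp ends β φ S (Function.update τ v true))
          rw [sub_add_cancel] at e4
          linarith
        have tri := norm_add_le
          (Zp ends β (fun e => if e ∈ insert e₀ T then -φ e else φ e) S
              (Function.update τ v true)
            - Zp ends β (fun e => if e ∈ T then -φ e else φ e) S (Function.update τ v true))
          (Zp ends β (fun e => if e ∈ T then -φ e else φ e) S (Function.update τ v true)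
            - Zp ends β φ S (Function.update τ v true))
        rw [sub_add_sub_cancel] at tri
        rw [Finset.card_insert_of_notMem he₀T, pow_succ]
        have hpw : (0:ℝ) ≤ (1 + (44/9) * ‖β‖) ^ T.card := by positivity
        nlinarith
    -- conclude
    have hflip : Zp ends β
          (fun e => if e ∈ Finset.univ.filter (fun e => v ∈ ends e) then -φ e else φ e) S
          (Function.update τ v true)
        = Zp ends β φ S (Function.update τ v false) := by
      apply Zp_flip_vertex hloop _ hv τ
      intro e
      simp [Finset.mem_filter]
    have hclaim := claim (Finset.univ.filter (fun e => v ∈ ends e))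
      (fun e heF => (Finset.mem_filter.mp heF).2)
    rw [hflip] at hclaim
    have hcard : (Finset.univ.filter (fun e => v ∈ ends e)).card = degree ends v := by
      rw [degree, Nat.card_eq_fintype_card, Fintype.card_subtype]
    have hFD : (Finset.univ.filter (fun e => v ∈ ends e)).card ≤ D := by
      rw [hcard]; exact hdeg v
    -- numeric bound
    have hnum : ((1 + (44/9) * ‖β‖) ^
        (Finset.univ.filter (fun e => v ∈ ends e)).card - 1) ≤ 1/5 := by
      have e1 : (1 + (44/9) * ‖β‖) ^
            (Finset.univ.filter (fun e => v ∈ ends e)).card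
          ≤ (1 + (44/9) * ‖β‖) ^ D :=
        pow_le_pow_right₀ (by linarith) hFD
      have e2 : (1 + (44/9) * ‖β‖) ≤ Real.exp ((44/9) * ‖β‖) := by
        have := Real.add_one_le_exp ((44/9) * ‖β‖)
        linarith
      have e3 : (1 + (44/9) * ‖β‖) ^ D ≤ Real.exp ((44/9) * ‖β‖) ^ D :=
        pow_le_pow_left₀ (by linarith) e2 D
      have e4 : Real.exp ((44/9) * ‖β‖) ^ D
          = Real.exp ((D:ℝ) * ((44/9) * ‖β‖)) := (Real.exp_nat_mul _ D).symm
      have e5 : (D:ℝ) * ((44/9) * ‖β‖) ≤ 44/477 := by nlinarith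
      have e6 : Real.exp ((D:ℝ) * ((44/9) * ‖β‖)) ≤ Real.exp (44/477) :=
        Real.exp_le_exp.mpr e5
      have e7 : Real.exp (44/477) ≤ 1/(1 - 44/477) := exp_le_inv_one_sub (by norm_num)
      have e8 : (1:ℝ)/(1 - 44/477) ≤ 6/5 := by norm_num
      rw [e4] at e3
      linarith
    have habs0 : (0:ℝ) ≤ ‖Zp ends β φ S (Function.update τ v true)‖ :=
      norm_nonneg _
    nlinarith

end Aux

/-- **Zero-freeness of the Ising partition function at high temperature.**
If `G` is a multigraph of maximum degree at most `Δ` (with `Δ ≥ 2`), the interaction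
satisfies `|φ(ε)| ≤ 1` for all edges, and `|β| ≤ 1/(e⁴Δ)`, then `Z_Ising(G;β) ≠ 0`. -/
theorem ising_partition_function_ne_zero [Fintype V] [Fintype Eg]
    (Δ : ℤ) (hΔ : 2 ≤ Δ)
    (ends : Eg → Sym2 V) (hloop : ∀ e : Eg, ¬ (ends e).IsDiag)
    (hdeg : ∀ v : V, (degree ends v : ℤ) ≤ Δ)
    (φ : Eg → ℝ) (hφ : ∀ e : Eg, |φ e| ≤ 1)
    (β : ℂ) (hβ : ‖β‖ ≤ 1 / (Real.exp 1 ^ 4 * Δ)) :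
    Zising ends φ β ≠ 0 := by
  have hb0 : 0 ≤ ‖β‖ := norm_nonneg β
  have hDΔ : ((Δ.toNat : ℤ)) = Δ := Int.toNat_of_nonneg (by linarith)
  have hD : 1 ≤ Δ.toNat := by omega
  have hdeg' : ∀ v : V, degree ends v ≤ Δ.toNat := by
    intro v
    have h := hdeg v
    rw [← hDΔ] at h
    exact_mod_cast h
  have he4 : (53:ℝ) ≤ Real.exp 1 ^ 4 := by
    have h := Real.exp_one_gt_d9
    have h2 : (2.7182818283:ℝ)^4 ≤ Real.exp 1 ^ 4 :=
      pow_le_pow_left₀ (by norm_num) (le_of_lt h) 4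
    nlinarith
  have hΔR : ((Δ.toNat : ℝ)) = (Δ : ℝ) := by exact_mod_cast congrArg (Int.cast : ℤ → ℝ) hDΔ
  have hΔpos : (0:ℝ) < (Δ : ℝ) := by
    have : (2:ℤ) ≤ Δ := hΔ
    exact_mod_cast lt_of_lt_of_le (by norm_num : (0:ℤ) < 2) this
  have hpos : (0:ℝ) < Real.exp 1 ^ 4 * (Δ : ℝ) := by positivity
  have h1 : ‖β‖ * (Real.exp 1 ^ 4 * (Δ : ℝ)) ≤ 1 := by
    have := (le_div_iff₀ hpos).mp hβ
    linarith
  have hb : ((Δ.toNat : ℝ)) * ‖β‖ ≤ 1 / 53 := by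
    rw [hΔR]
    nlinarith [mul_le_mul_of_nonneg_right he4 (mul_nonneg (le_of_lt hΔpos) hb0)]
  have hZp : Zising ends φ β
      = (2:ℂ) ^ (-(Fintype.card V : ℤ)) * Zp ends β φ Finset.univ (fun _ => true) := by
    unfold Zising Zp w
    congr 1
    apply Finset.sum_congr rfl
    intro σ _
    rw [if_pos]
    intro x hx
    exact absurd (Finset.mem_univ x) hx
  rw [hZp]
  exact mul_ne_zero (zpow_ne_zero _ two_ne_zero)
    (main ends β hloop Δ.toNat hD hdeg' hb Finset.univ.card φ hφ Finset.univ rfl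
      (fun _ => true)).1

end Stmt8
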